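/- In the non-adaptive single-copy measurement model, the mutual information between the random label (a,s) (index of state ρ_{(a,s)} = (I + sP_a)/2^n, uniform over non-identity Paulis and signs) and the outcome o of any rank-one POVM {w_j 2^n |ψ_j⟩⟨ψ_j|} on a single copy of ρ_{(a,s)} is at most 1/(2^n + 1). -/

import Mathlib

open Matrix BigOperators

/-- The single-qubit Pauli matrices `I, X, Y, Z`. -/
noncomputable def pauliM : Fin 4 → Matrix (Fin 2) (Fin 2) ℂ
  | 0 => 1
  | 1 => !![0, 1; 1, 0]
  | 2 => !![0, -Complex.I; Complex.I, 0]
  | 3 => !![1, 0; 0, -1]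

/-- The `n`-qubit Pauli operator `P_a = σ_{a 1} ⊗ ⋯ ⊗ σ_{a n}`. -/
noncomputable def nPauli {n : ℕ} (a : Fin n → Fin 4) :
    Matrix (Fin n → Fin 2) (Fin n → Fin 2) ℂ :=
  fun x y => ∏ i, pauliM (a i) (x i) (y i)

/-- The expectation value `⟨ψ|M|ψ⟩`. -/
noncomputable def expval {d : Type*} [Fintype d] (ψ : d → ℂ) (M : Matrix d d ℂ) : ℂ :=
  ∑ x, ∑ y, (starRingEnd ℂ) (ψ x) * M x y * ψ y

/-- The state `ρ_{(a,s)} = (I + s P_a)/2ⁿ`. -/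
noncomputable def mixedPauliState {n : ℕ} (a : Fin n → Fin 4) (s : ℝ) :
    Matrix (Fin n → Fin 2) (Fin n → Fin 2) ℂ :=
  ((2 : ℂ) ^ n)⁻¹ • (1 + (s : ℂ) • nPauli a)

/-- Outcome probabilities `p_{(a,s)}(j) = w_j 2ⁿ ⟨ψ_j|ρ_{(a,s)}|ψ_j⟩` of the
rank-one POVM `{w_j 2ⁿ |ψ_j⟩⟨ψ_j|}` on the state `ρ_{(a,s)}`. -/
noncomputable def outcomeProb {n : ℕ} {J : Type*} [Fintype J]
    (w : J → ℝ) (ψ : J → (Fin n → Fin 2) → ℂ) (a : Fin n → Fin 4) (s : ℝ) (j : J) : ℝ :=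
  w j * 2 ^ n * (expval (ψ j) (mixedPauliState a s)).re

section Aux

set_option linter.unusedSectionVars false

lemma pauli_herm (c : Fin 4) (u v : Fin 2) : (starRingEnd ℂ) (pauliM c u v) = pauliM c v u := by
  fin_cases c <;> fin_cases u <;> fin_cases v <;>
    simp [pauliM, Matrix.one_apply, Complex.ext_iff]

lemma pauli_sq (c : Fin 4) (u v : Fin 2) :
    ∑ z, pauliM c u z * pauliM c z v = if u = v then 1 else 0 := by
  fin_cases c <;> fin_cases u <;> fin_cases v <;>
    simp [pauliM, Matrix.one_apply, Fin.sum_univ_two, Complex.ext_iff]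

lemma pauli_orth (u v u' v' : Fin 2) :
    ∑ c, pauliM c u v * (starRingEnd ℂ) (pauliM c u' v') =
      if u = u' ∧ v = v' then 2 else 0 := by
  fin_cases u <;> fin_cases v <;> fin_cases u' <;> fin_cases v' <;>
    simp [pauliM, Matrix.one_apply, Fin.sum_univ_four, Complex.ext_iff] <;> norm_num

lemma sum_fn_prod {n : ℕ} {κ : Type*} [Fintype κ] (f : Fin n → κ → ℂ) :
    ∑ z : Fin n → κ, ∏ i, f i (z i) = ∏ i, ∑ u, f i u := (Fintype.prod_sum f).symm

lemma nPauli_herm {n : ℕ} (a : Fin n → Fin 4) (x y : Fin n → Fin 2) :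
    (starRingEnd ℂ) (nPauli a x y) = nPauli a y x := by
  simp [nPauli, map_prod, pauli_herm]

lemma nPauli_mul {n : ℕ} (a : Fin n → Fin 4) (x y : Fin n → Fin 2) :
    ∑ z, nPauli a x z * nPauli a z y = if x = y then 1 else 0 := by
  have h1 : ∀ z : Fin n → Fin 2, nPauli a x z * nPauli a z y
      = ∏ i, (pauliM (a i) (x i) (z i) * pauliM (a i) (z i) (y i)) := by
    intro z; simp [nPauli, Finset.prod_mul_distrib]
  rw [Finset.sum_congr rfl fun z _ => h1 z,
    sum_fn_prod (fun i u => pauliM (a i) (x i) u * pauliM (a i) u (y i))]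
  simp only [pauli_sq]
  by_cases h : x = y
  · subst h; simp
  · obtain ⟨i, hi⟩ := Function.ne_iff.mp h
    rw [if_neg h]
    exact Finset.prod_eq_zero (Finset.mem_univ i) (by simp [hi])

lemma nPauli_orth {n : ℕ} (x y x' y' : Fin n → Fin 2) :
    ∑ a : Fin n → Fin 4, nPauli a x y * (starRingEnd ℂ) (nPauli a x' y') =
      if x = x' ∧ y = y' then 2 ^ n else 0 := by
  have h1 : ∀ a : Fin n → Fin 4, nPauli a x y * (starRingEnd ℂ) (nPauli a x' y')
      = ∏ i, (pauliM (a i) (x i) (y i) * (starRingEnd ℂ) (pauliM (a i) (x' i) (y' i))) := by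
    intro a; simp [nPauli, map_prod, Finset.prod_mul_distrib]
  rw [Finset.sum_congr rfl fun a _ => h1 a,
    sum_fn_prod (fun i (c : Fin 4) => pauliM c (x i) (y i) * (starRingEnd ℂ) (pauliM c (x' i) (y' i)))]
  simp only [pauli_orth]
  by_cases h : x = x' ∧ y = y'
  · obtain ⟨h1, h2⟩ := h; subst h1; subst h2; simp
  · rw [if_neg h]
    have h' : (¬ x = x') ∨ (¬ y = y') := by tauto
    obtain ⟨i, hi⟩ : ∃ i, ¬(x i = x' i ∧ y i = y' i) := by
      rcases h' with h' | h'
      · obtain ⟨i, hi⟩ := Function.ne_iff.mp h'; exact ⟨i, fun hc => hi hc.1⟩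
      · obtain ⟨i, hi⟩ := Function.ne_iff.mp h'; exact ⟨i, fun hc => hi hc.2⟩
    exact Finset.prod_eq_zero (Finset.mem_univ i) (by simp [hi])

lemma nPauli_zero {n : ℕ} : nPauli (fun _ => (0 : Fin 4) : Fin n → Fin 4) = 1 := by
  ext x y
  show (∏ i, pauliM 0 (x i) (y i)) = (1 : Matrix (Fin n → Fin 2) (Fin n → Fin 2) ℂ) x y
  have : ∀ i, pauliM 0 (x i) (y i) = if x i = y i then 1 else 0 := by
    intro i; simp [pauliM, Matrix.one_apply]
  rw [Finset.prod_congr rfl fun i _ => this i, Matrix.one_apply]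
  by_cases h : x = y
  · subst h; simp
  · obtain ⟨i, hi⟩ := Function.ne_iff.mp h
    rw [if_neg h]
    exact Finset.prod_eq_zero (Finset.mem_univ i) (by simp [hi])

variable {d : Type*} [Fintype d] [DecidableEq d]

lemma expval_one (ψ : d → ℂ) (hψ : ∑ x, ‖ψ x‖ ^ 2 = 1) :
    expval ψ (1 : Matrix d d ℂ) = 1 := by
  have h1 : expval ψ (1 : Matrix d d ℂ) = ∑ x, (starRingEnd ℂ) (ψ x) * ψ x := by
    rw [expval]
    refine Finset.sum_congr rfl fun x _ => ?_
    rw [Finset.sum_eq_single x (fun y _ hy => by simp [Matrix.one_apply, Ne.symm hy])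
      (by simp)]
    simp [Matrix.one_apply]
  rw [h1]
  have h2 : ∀ x, (starRingEnd ℂ) (ψ x) * ψ x = ((‖ψ x‖ ^ 2 : ℝ) : ℂ) := by
    intro x
    rw [mul_comm, Complex.mul_conj, Complex.sq_norm]
  simp only [h2, ← Complex.ofReal_sum, hψ, Complex.ofReal_one]

lemma expval_add (ψ : d → ℂ) (M N : Matrix d d ℂ) :
    expval ψ (M + N) = expval ψ M + expval ψ N := by
  simp only [expval, Matrix.add_apply, ← Finset.sum_add_distrib]
  refine Finset.sum_congr rfl fun x _ => Finset.sum_congr rfl fun y _ => by ring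

lemma expval_smul (ψ : d → ℂ) (c : ℂ) (M : Matrix d d ℂ) :
    expval ψ (c • M) = c * expval ψ M := by
  simp only [expval, Matrix.smul_apply, smul_eq_mul, Finset.mul_sum]
  refine Finset.sum_congr rfl fun x _ => Finset.sum_congr rfl fun y _ => by ring

lemma expval_real (ψ : d → ℂ) (M : Matrix d d ℂ) (hM : ∀ x y, (starRingEnd ℂ) (M x y) = M y x) :
    (starRingEnd ℂ) (expval ψ M) = expval ψ M := by
  rw [expval, map_sum, Finset.sum_comm]
  refine Finset.sum_congr rfl fun x _ => ?_
  rw [map_sum]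
  refine Finset.sum_congr rfl fun y _ => ?_
  rw [_root_.map_mul, _root_.map_mul, hM, Complex.conj_conj]
  ring

lemma expval_eq_re (ψ : d → ℂ) (M : Matrix d d ℂ)
    (hM : ∀ x y, (starRingEnd ℂ) (M x y) = M y x) :
    expval ψ M = ((expval ψ M).re : ℂ) :=
  (Complex.conj_eq_iff_re.mp (expval_real ψ M hM)).symm

lemma expval_dotProduct (ψ : d → ℂ) (M : Matrix d d ℂ) :
    expval ψ M = star ψ ⬝ᵥ M.mulVec ψ := by
  simp [expval, dotProduct, Matrix.mulVec, Finset.mul_sum, mul_assoc]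

open scoped ComplexOrder in
lemma expval_re_nonneg_of_psd (ψ : d → ℂ) (M : Matrix d d ℂ) (hM : M.PosSemidef) :
    0 ≤ (expval ψ M).re := by
  have h := hM.dotProduct_mulVec_nonneg ψ
  rw [Complex.le_def] at h
  rw [expval_dotProduct]
  simpa using h.1

lemma nPauli_conjTranspose {n : ℕ} (a : Fin n → Fin 4) : (nPauli a)ᴴ = nPauli a := by
  ext x y; rw [Matrix.conjTranspose_apply]; exact nPauli_herm a y x

lemma nPauli_sq {n : ℕ} (a : Fin n → Fin 4) : nPauli a * nPauli a = 1 := by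
  ext x y; rw [Matrix.mul_apply, nPauli_mul, Matrix.one_apply]

open scoped ComplexOrder in
lemma onePlusPauli_nonneg {n : ℕ} (a : Fin n → Fin 4) (s : ℝ) (hs : s = 1 ∨ s = -1)
    (ψ : (Fin n → Fin 2) → ℂ) :
    0 ≤ (expval ψ (1 + (s : ℂ) • nPauli a)).re := by
  set M : Matrix (Fin n → Fin 2) (Fin n → Fin 2) ℂ := 1 + (s : ℂ) • nPauli a with hMdef
  have hherm : Mᴴ = M := by
    rw [hMdef, Matrix.conjTranspose_add, Matrix.conjTranspose_one,
      Matrix.conjTranspose_smul, nPauli_conjTranspose]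
    congr 1
    simp [Complex.conj_ofReal]
  have hs2 : (s : ℂ) * (s : ℂ) = 1 := by
    rcases hs with h | h <;> simp [h]
  have hMM : M * M = (2 : ℂ) • M := by
    rw [hMdef]
    simp only [add_mul, mul_add, one_mul, mul_one, smul_mul_smul_comm, nPauli_sq, hs2,
      one_smul, two_smul, smul_add]
    abel
  have hpsd : (Mᴴ * M).PosSemidef := Matrix.posSemidef_conjTranspose_mul_self M
  rw [hherm, hMM] at hpsd
  have h2 := expval_re_nonneg_of_psd ψ _ hpsd
  rw [expval_smul] at h2
  simp [Complex.mul_re] at h2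
  linarith

lemma expval_pair (ψ : d → ℂ) (M : Matrix d d ℂ) :
    expval ψ M = ∑ p : d × d, (starRingEnd ℂ) (ψ p.1) * M p.1 p.2 * ψ p.2 := by
  rw [expval]
  exact (Fintype.sum_prod_type fun p : d × d => (starRingEnd ℂ) (ψ p.1) * M p.1 p.2 * ψ p.2).symm

lemma nPauli_second_moment {n : ℕ} (ψ : (Fin n → Fin 2) → ℂ)
    (hψ : ∑ x, ‖ψ x‖ ^ 2 = 1) :
    ∑ a : Fin n → Fin 4, expval ψ (nPauli a) * (starRingEnd ℂ) (expval ψ (nPauli a))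
      = (2 ^ n : ℂ) := by
  have habs : ∀ x, (starRingEnd ℂ) (ψ x) * ψ x = ((‖ψ x‖ ^ 2 : ℝ) : ℂ) := by
    intro x
    rw [mul_comm, Complex.mul_conj, Complex.sq_norm]
  calc ∑ a : Fin n → Fin 4, expval ψ (nPauli a) * (starRingEnd ℂ) (expval ψ (nPauli a))
      = ∑ a : Fin n → Fin 4, ∑ p : (Fin n → Fin 2) × (Fin n → Fin 2),
          ∑ q : (Fin n → Fin 2) × (Fin n → Fin 2),
          ((starRingEnd ℂ) (ψ p.1) * ψ p.2 * ψ q.1 * (starRingEnd ℂ) (ψ q.2)) *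
            (nPauli a p.1 p.2 * (starRingEnd ℂ) (nPauli a q.1 q.2)) := by
        refine Finset.sum_congr rfl fun a _ => ?_
        rw [expval_pair, map_sum, Finset.sum_mul_sum]
        refine Finset.sum_congr rfl fun p _ => Finset.sum_congr rfl fun q _ => ?_
        simp only [_root_.map_mul, Complex.conj_conj]
        ring
    _ = ∑ p : (Fin n → Fin 2) × (Fin n → Fin 2), ∑ q : (Fin n → Fin 2) × (Fin n → Fin 2),
          ((starRingEnd ℂ) (ψ p.1) * ψ p.2 * ψ q.1 * (starRingEnd ℂ) (ψ q.2)) *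
            ∑ a : Fin n → Fin 4, nPauli a p.1 p.2 * (starRingEnd ℂ) (nPauli a q.1 q.2) := by
        rw [Finset.sum_comm]
        refine Finset.sum_congr rfl fun p _ => ?_
        rw [Finset.sum_comm]
        exact Finset.sum_congr rfl fun q _ => (Finset.mul_sum _ _ _).symm
    _ = ∑ p : (Fin n → Fin 2) × (Fin n → Fin 2),
          ((starRingEnd ℂ) (ψ p.1) * ψ p.1) * (ψ p.2 * (starRingEnd ℂ) (ψ p.2)) * (2 ^ n : ℂ) := by
        simp_rw [nPauli_orth]
        refine Finset.sum_congr rfl fun p _ => ?_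
        rw [Finset.sum_eq_single p]
        · rw [if_pos ⟨rfl, rfl⟩]; ring
        · intro q _ hq
          rw [if_neg, mul_zero]
          intro hc
          exact hq (Prod.ext hc.1 hc.2).symm
        · simp
    _ = (2 ^ n : ℂ) := by
        have hA : ∑ x, ((‖ψ x‖ ^ 2 : ℝ) : ℂ) = 1 := by
          rw [← Complex.ofReal_sum, hψ, Complex.ofReal_one]
        have hterm : ∀ p : (Fin n → Fin 2) × (Fin n → Fin 2),
            (starRingEnd ℂ) (ψ p.1) * ψ p.1 * (ψ p.2 * (starRingEnd ℂ) (ψ p.2)) * (2 ^ n : ℂ)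
              = (2 ^ n : ℂ) * (((‖ψ p.1‖ ^ 2 : ℝ) : ℂ) *
                  ((‖ψ p.2‖ ^ 2 : ℝ) : ℂ)) := by
          intro p
          rw [habs p.1, mul_comm (ψ p.2), habs p.2]
          ring
        rw [Finset.sum_congr rfl fun p _ => hterm p, ← Finset.mul_sum,
          Fintype.sum_prod_type' (f := fun x y => ((‖ψ x‖ ^ 2 : ℝ) : ℂ) *
            ((‖ψ y‖ ^ 2 : ℝ) : ℂ)), ← Finset.sum_mul_sum, hA, one_mul, mul_one]

/-- The key scalar inequality coming from concavity of `log`. -/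
lemma log_key_ineq (wj u : ℝ) (hw : 0 ≤ wj) (hu : 0 ≤ u) :
    (wj * u) * Real.log (wj * u) - (wj * u) * Real.log wj ≤ wj * (u * (u - 1)) := by
  rcases eq_or_lt_of_le hw with hw0 | hw0
  · simp [← hw0]
  rcases eq_or_lt_of_le hu with hu0 | hu0
  · simp [← hu0]
  have hlog : Real.log (wj * u) = Real.log wj + Real.log u :=
    Real.log_mul (ne_of_gt hw0) (ne_of_gt hu0)
  rw [hlog]
  have hb : Real.log u ≤ u - 1 := Real.log_le_sub_one_of_pos hu0
  have hwu : 0 ≤ wj * u := le_of_lt (mul_pos hw0 hu0)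
  nlinarith [mul_le_mul_of_nonneg_left hb hwu]

end Aux

/-- The mutual information between the uniformly random label `(a,s)` (over the
`2(4ⁿ−1)` non-identity Paulis and signs) and the outcome of any rank-one POVM
`{w_j 2ⁿ |ψ_j⟩⟨ψ_j|}` on a single copy of `ρ_{(a,s)} = (I + sP_a)/2ⁿ` is at most
`1/(2ⁿ + 1)` (natural logarithm). -/
theorem single_copy_mutual_information_bound {n : ℕ} (hn : 0 < n)
    {J : Type*} [Fintype J] (w : J → ℝ) (ψ : J → (Fin n → Fin 2) → ℂ)
    (hw0 : ∀ j, 0 ≤ w j) (hw1 : ∑ j, w j = 1)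
    (hψ : ∀ j, ∑ x, ‖ψ j x‖ ^ 2 = 1)
    (hPOVM : ∑ j, ((w j : ℂ) * 2 ^ n) •
        Matrix.vecMulVec (ψ j) (fun x => (starRingEnd ℂ) (ψ j x)) = 1) :
    (((2 : ℝ) * (4 ^ n - 1))⁻¹ *
        ∑ a ∈ Finset.univ.filter (fun a : Fin n → Fin 4 => a ≠ fun _ => 0),
          ∑ s ∈ ({1, -1} : Finset ℝ),
            ∑ j, outcomeProb w ψ a s j * Real.log (outcomeProb w ψ a s j)) -
      ∑ j, (((2 : ℝ) * (4 ^ n - 1))⁻¹ *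
          ∑ a ∈ Finset.univ.filter (fun a : Fin n → Fin 4 => a ≠ fun _ => 0),
            ∑ s ∈ ({1, -1} : Finset ℝ), outcomeProb w ψ a s j) *
        Real.log (((2 : ℝ) * (4 ^ n - 1))⁻¹ *
          ∑ a ∈ Finset.univ.filter (fun a : Fin n → Fin 4 => a ≠ fun _ => 0),
            ∑ s ∈ ({1, -1} : Finset ℝ), outcomeProb w ψ a s j) ≤
      1 / (2 ^ n + 1) := by
  classical
  set A : Finset (Fin n → Fin 4) :=
    Finset.univ.filter (fun a : Fin n → Fin 4 => a ≠ fun _ => 0) with hAdef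
  set r : J → (Fin n → Fin 4) → ℝ := fun j a => (expval (ψ j) (nPauli a)).re with hrdef
  -- basic positivity facts
  have h2pos : (0 : ℝ) < 2 ^ n := by positivity
  have h2gt1 : (1 : ℝ) < 2 ^ n := by
    calc (1 : ℝ) < 2 := by norm_num
    _ ≤ 2 ^ n := le_self_pow₀ (by norm_num) hn.ne'
  have h4n : (4 : ℝ) ^ n = (2 ^ n) ^ 2 := by
    rw [show (4 : ℝ) = 2 ^ 2 by norm_num, ← pow_mul, mul_comm, pow_mul]
  have h4gt1 : (1 : ℝ) < 4 ^ n := by nlinarith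
  have hNpos : (0 : ℝ) < 2 * (4 ^ n - 1) := by nlinarith
  have hne : (4 : ℝ) ^ n - 1 ≠ 0 := by linarith
  have hS : ∀ f : ℝ → ℝ, ∑ s ∈ ({1, -1} : Finset ℝ), f s = f 1 + f (-1) := fun f =>
    Finset.sum_pair (by norm_num)
  -- outcome probabilities
  have hexp1 : ∀ j a (s : ℝ),
      expval (ψ j) (1 + (s : ℂ) • nPauli a) = ((1 + s * r j a : ℝ) : ℂ) := by
    intro j a s
    rw [expval_add, expval_smul, expval_one (ψ j) (hψ j),
      expval_eq_re (ψ j) (nPauli a) (nPauli_herm a)]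
    push_cast
    ring
  have hprob : ∀ a (s : ℝ) j, outcomeProb w ψ a s j = w j * (1 + s * r j a) := by
    intro a s j
    rw [outcomeProb, mixedPauliState, expval_smul, hexp1]
    have hc : ((2 : ℂ) ^ n)⁻¹ * ((1 + s * r j a : ℝ) : ℂ)
        = ((((2 : ℝ) ^ n)⁻¹ * (1 + s * r j a) : ℝ) : ℂ) := by
      push_cast
      ring
    rw [hc, Complex.ofReal_re]
    field_simp
  have hpos : ∀ a (s : ℝ), (s = 1 ∨ s = -1) → ∀ j, 0 ≤ 1 + s * r j a := by
    intro a s hs j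
    have h := onePlusPauli_nonneg a s hs (ψ j)
    rwa [hexp1, Complex.ofReal_re] at h
  -- second moment over non-identity Paulis
  have hrsq : ∀ j, ∑ a ∈ A, r j a ^ 2 = 2 ^ n - 1 := by
    intro j
    have h := nPauli_second_moment (ψ j) (hψ j)
    have hterm : ∀ a : Fin n → Fin 4,
        expval (ψ j) (nPauli a) * (starRingEnd ℂ) (expval (ψ j) (nPauli a))
          = ((r j a ^ 2 : ℝ) : ℂ) := by
      intro a
      rw [expval_eq_re (ψ j) (nPauli a) (nPauli_herm a), Complex.conj_ofReal]
      push_cast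
      ring
    rw [Finset.sum_congr rfl fun a _ => hterm a, ← Complex.ofReal_sum] at h
    have hall : ∑ a : Fin n → Fin 4, r j a ^ 2 = 2 ^ n := by
      exact_mod_cast h
    have hid : r j (fun _ => 0) = 1 := by
      have : expval (ψ j) (nPauli (fun _ => (0 : Fin 4))) = 1 := by
        rw [nPauli_zero, expval_one (ψ j) (hψ j)]
      simp [hrdef, this]
    have hsplit : (∑ a ∈ A, r j a ^ 2) + r j (fun _ => 0) ^ 2
        = ∑ a : Fin n → Fin 4, r j a ^ 2 := by
      rw [hAdef, Finset.filter_ne']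
      exact Finset.sum_erase_add _ _ (Finset.mem_univ _)
    rw [hall, hid] at hsplit
    linarith
  -- cardinality of A
  have hcard : (A.card : ℝ) = 4 ^ n - 1 := by
    have h1 : A.card = 4 ^ n - 1 := by
      rw [hAdef, Finset.filter_ne', Finset.card_erase_of_mem (Finset.mem_univ _),
        Finset.card_univ, Fintype.card_fun]
      simp
    rw [h1, Nat.cast_sub (Nat.one_le_pow _ _ (by norm_num))]
    push_cast
    ring
  -- the average of the outcome probabilities is w j
  have hq : ∀ j, (((2 : ℝ) * (4 ^ n - 1))⁻¹ *
      ∑ a ∈ A, ∑ s ∈ ({1, -1} : Finset ℝ), outcomeProb w ψ a s j) = w j := by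
    intro j
    have h1 : ∀ a : Fin n → Fin 4,
        ∑ s ∈ ({1, -1} : Finset ℝ), outcomeProb w ψ a s j = 2 * w j := by
      intro a
      rw [hS fun s => outcomeProb w ψ a s j, hprob, hprob]
      ring
    rw [Finset.sum_congr rfl fun a _ => h1 a, Finset.sum_const, nsmul_eq_mul, hcard]
    field_simp
  simp only [hq]
  -- rewrite the entropy term
  have hlog : ∑ j, w j * Real.log (w j)
      = ((2 : ℝ) * (4 ^ n - 1))⁻¹ * ∑ a ∈ A, ∑ s ∈ ({1, -1} : Finset ℝ),
          ∑ j, outcomeProb w ψ a s j * Real.log (w j) := by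
    have h1 : ∀ a : Fin n → Fin 4, ∑ s ∈ ({1, -1} : Finset ℝ),
        ∑ j, outcomeProb w ψ a s j * Real.log (w j)
          = 2 * ∑ j, w j * Real.log (w j) := by
      intro a
      rw [hS fun s => ∑ j, outcomeProb w ψ a s j * Real.log (w j),
        ← Finset.sum_add_distrib, Finset.mul_sum]
      refine Finset.sum_congr rfl fun j _ => ?_
      rw [hprob, hprob]
      ring
    rw [Finset.sum_congr rfl fun a _ => h1 a, Finset.sum_const, nsmul_eq_mul, hcard]
    field_simp
  rw [hlog, ← mul_sub, ← Finset.sum_sub_distrib]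
  have hcomb : ∀ a ∈ A, (∑ s ∈ ({1, -1} : Finset ℝ),
        ∑ j, outcomeProb w ψ a s j * Real.log (outcomeProb w ψ a s j))
      - (∑ s ∈ ({1, -1} : Finset ℝ), ∑ j, outcomeProb w ψ a s j * Real.log (w j))
      ≤ 2 * ∑ j, w j * r j a ^ 2 := by
    intro a _
    rw [← Finset.sum_sub_distrib]
    have hstep : ∀ s : ℝ, (s = 1 ∨ s = -1) →
        (∑ j, outcomeProb w ψ a s j * Real.log (outcomeProb w ψ a s j))
          - (∑ j, outcomeProb w ψ a s j * Real.log (w j))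
          ≤ ∑ j, w j * ((1 + s * r j a) * (s * r j a)) := by
      intro s hs
      rw [← Finset.sum_sub_distrib]
      refine Finset.sum_le_sum fun j _ => ?_
      have h := log_key_ineq (w j) (1 + s * r j a) (hw0 j) (hpos a s hs j)
      rw [← hprob a s j] at h
      calc outcomeProb w ψ a s j * Real.log (outcomeProb w ψ a s j)
            - outcomeProb w ψ a s j * Real.log (w j)
          ≤ w j * ((1 + s * r j a) * (1 + s * r j a - 1)) := h
        _ = w j * ((1 + s * r j a) * (s * r j a)) := by ring
    calc ∑ s ∈ ({1, -1} : Finset ℝ),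
          ((∑ j, outcomeProb w ψ a s j * Real.log (outcomeProb w ψ a s j))
            - ∑ j, outcomeProb w ψ a s j * Real.log (w j))
        ≤ ∑ s ∈ ({1, -1} : Finset ℝ), ∑ j, w j * ((1 + s * r j a) * (s * r j a)) := by
          refine Finset.sum_le_sum fun s hs => ?_
          have hs' : s = 1 ∨ s = -1 := by
            simpa using hs
          exact hstep s hs'
      _ = 2 * ∑ j, w j * r j a ^ 2 := by
          rw [hS fun s => ∑ j, w j * ((1 + s * r j a) * (s * r j a)),
            ← Finset.sum_add_distrib, Finset.mul_sum]
          refine Finset.sum_congr rfl fun j _ => ?_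
          ring
  calc ((2 : ℝ) * (4 ^ n - 1))⁻¹ * ∑ a ∈ A,
        ((∑ s ∈ ({1, -1} : Finset ℝ),
          ∑ j, outcomeProb w ψ a s j * Real.log (outcomeProb w ψ a s j))
        - ∑ s ∈ ({1, -1} : Finset ℝ), ∑ j, outcomeProb w ψ a s j * Real.log (w j))
      ≤ ((2 : ℝ) * (4 ^ n - 1))⁻¹ * ∑ a ∈ A, 2 * ∑ j, w j * r j a ^ 2 := by
        refine mul_le_mul_of_nonneg_left (Finset.sum_le_sum hcomb) ?_
        positivity
    _ = ((2 : ℝ) * (4 ^ n - 1))⁻¹ * (2 * (2 ^ n - 1)) := by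
        congr 1
        rw [← Finset.mul_sum, Finset.sum_comm]
        have : ∀ j, ∑ a ∈ A, w j * r j a ^ 2 = w j * (2 ^ n - 1) := by
          intro j
          rw [← Finset.mul_sum, hrsq j]
        rw [Finset.sum_congr rfl fun j _ => this j, ← Finset.sum_mul, hw1, one_mul]
    _ = 1 / (2 ^ n + 1) := by
        rw [h4n]
        have ha : (2 : ℝ) * (2 ^ n - 1) ≠ 0 := by nlinarith
        rw [show (2 : ℝ) * ((2 ^ n) ^ 2 - 1) = (2 * (2 ^ n - 1)) * (2 ^ n + 1) by ring,
          mul_inv, mul_comm ((2 * ((2:ℝ) ^ n - 1))⁻¹), mul_assoc, inv_mul_cancel₀ ha,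
          mul_one, one_div]
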